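/- Fix α ∈ ℂ with sinh α ≠ 0, set J = cosh α and ε(u) = −sinh(u)/(2 sinh α). Let H₂ = σ₁⊗σ₁ + σ₂⊗σ₂ + J σ₃⊗σ₃ act on ℂ² ⊗ ℂ² and let P be the flip map P(v⊗w) = w⊗v. Then the End(ℂ²⊗ℂ²)-valued functions F(u) = sinh(u+α)⁻¹ · R_α(u) and G(u) = (1 − J·ε(u))⁻¹ · exp(−ε(u) H₂) ∘ P, defined for u in a neighbourhood of 0 in ℂ, agree to first order at u = 0: F(0) = G(0) = P and F′(0) = G′(0). (That is, the XXZ R-matrix exp(−ε H₂)∘P coincides, up to a global scalar factor and O(ε²) terms, with the six-vertex Yang–Baxter solution R_α(u) under the parametrization ε = −sinh(u)/(2 sinh α), J = cosh α.) -/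

import Mathlib

/-!
STATEMENT 4: Fix α ∈ ℂ with sinh α ≠ 0, J = cosh α, ε(u) = −sinh(u)/(2 sinh α).
With H₂ = σ₁⊗σ₁ + σ₂⊗σ₂ + J σ₃⊗σ₃ on ℂ² ⊗ ℂ² and P the flip map, the functions
F(u) = sinh(u+α)⁻¹ · R_α(u) and G(u) = (1 − J ε(u))⁻¹ · exp(−ε(u) H₂) ∘ P agree to
first order at u = 0: F(0) = G(0) = P and F′(0) = G′(0).

Operators on ℂ² ⊗ ℂ² are represented by their matrices in the standard product basis,
`exp` is the matrix exponential (`NormedSpace.exp ℂ`), and the equality of derivatives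
is stated entrywise: there is a single matrix D which is the entrywise derivative of
both F and G at 0.
-/

open Complex Matrix Kronecker

/-- The Pauli matrices σ₁, σ₂, σ₃. -/
noncomputable def pauli : Fin 3 → Matrix (Fin 2) (Fin 2) ℂ
  | 0 => !![0, 1; 1, 0]
  | 1 => !![0, -Complex.I; Complex.I, 0]
  | 2 => !![1, 0; 0, -1]

/-- The two-site XXZ Hamiltonian H₂ = σ₁⊗σ₁ + σ₂⊗σ₂ + J σ₃⊗σ₃ on ℂ² ⊗ ℂ². -/
noncomputable def H2 (J : ℂ) : Matrix (Fin 2 × Fin 2) (Fin 2 × Fin 2) ℂ :=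
  pauli 0 ⊗ₖ pauli 0 + pauli 1 ⊗ₖ pauli 1 + J • (pauli 2 ⊗ₖ pauli 2)

/-- The flip map P(v ⊗ w) = w ⊗ v on ℂ² ⊗ ℂ². -/
noncomputable def flipP : Matrix (Fin 2 × Fin 2) (Fin 2 × Fin 2) ℂ :=
  fun p q => if p.1 = q.2 ∧ p.2 = q.1 then 1 else 0

/-- The six-vertex R-matrix `R_α(u)` on ℂ² ⊗ ℂ²: in the ordered basis
(e₁⊗e₁, e₁⊗e₂, e₂⊗e₁, e₂⊗e₂) it has diagonal (sinh(u+α), sinh u, sinh u, sinh(u+α)),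
entries sinh α in positions (2,3) and (3,2), and zeros elsewhere. -/
noncomputable def sixVertexR (α u : ℂ) : Matrix (Fin 2 × Fin 2) (Fin 2 × Fin 2) ℂ :=
  fun p q =>
    if p = q then (if p.1 = p.2 then Complex.sinh (u + α) else Complex.sinh u)
    else if p.1 = q.2 ∧ p.2 = q.1 ∧ p.1 ≠ p.2 then Complex.sinh α
    else 0

noncomputable def dvec (J : ℂ) : Fin 2 × Fin 2 → ℂ := fun i =>
  if i.1 = i.2 then J else if i.1 = 0 then 2 - J else -(2 + J)

noncomputable def Umat : Matrix (Fin 2 × Fin 2) (Fin 2 × Fin 2) ℂ := fun p i =>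
  if i.1 = i.2 then (if p = i then 1 else 0)
  else if p = (0, 1) then 1
  else if p = (1, 0) then (if i = (0, 1) then 1 else -1)
  else 0

noncomputable def Uinv : Matrix (Fin 2 × Fin 2) (Fin 2 × Fin 2) ℂ := fun i p =>
  if i.1 = i.2 then (if p = i then 1 else 0)
  else if p = (0, 1) then 1/2
  else if p = (1, 0) then (if i = (0, 1) then 1/2 else -1/2)
  else 0

lemma UUinv : Umat * Uinv = 1 := by
  ext ⟨a, b⟩ ⟨c, d⟩
  fin_cases a <;> fin_cases b <;> fin_cases c <;> fin_cases d <;>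
    simp [Matrix.mul_apply, Fintype.sum_prod_type, Fin.sum_univ_two, Umat, Uinv,
      Matrix.one_apply, Prod.ext_iff] <;> norm_num

lemma UinvU : Uinv * Umat = 1 := by
  ext ⟨a, b⟩ ⟨c, d⟩
  fin_cases a <;> fin_cases b <;> fin_cases c <;> fin_cases d <;>
    simp [Matrix.mul_apply, Fintype.sum_prod_type, Fin.sum_univ_two, Umat, Uinv,
      Matrix.one_apply, Prod.ext_iff] <;> norm_num

lemma H2decomp (J : ℂ) : H2 J = Umat * diagonal (dvec J) * Uinv := by
  ext ⟨a, b⟩ ⟨c, d⟩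
  fin_cases a <;> fin_cases b <;> fin_cases c <;> fin_cases d <;>
    simp [Matrix.mul_apply, Fintype.sum_prod_type, Fin.sum_univ_two, Umat, Uinv,
      dvec, H2, pauli, Matrix.diagonal, Prod.ext_iff, Matrix.kroneckerMap_apply] <;> ring

lemma exp_smul_H2 (J c : ℂ) :
    NormedSpace.exp (c • H2 J) =
      Umat * diagonal (fun i => Complex.exp (c * dvec J i)) * Uinv := by
  let u : (Matrix (Fin 2 × Fin 2) (Fin 2 × Fin 2) ℂ)ˣ := ⟨Umat, Uinv, UUinv, UinvU⟩
  have h : c • H2 J = (u : Matrix (Fin 2 × Fin 2) (Fin 2 × Fin 2) ℂ) * diagonal (fun i => c * dvec J i) * ((u⁻¹ : _ˣ) : Matrix (Fin 2 × Fin 2) (Fin 2 × Fin 2) ℂ) := by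
    show c • H2 J = Umat * diagonal (fun i => c * dvec J i) * Uinv
    rw [H2decomp, ← smul_mul_assoc, ← mul_smul_comm, ← Matrix.diagonal_smul]
    congr 2
  rw [h, Matrix.exp_units_conj, Matrix.exp_diagonal]
  show Umat * _ * Uinv = _
  congr 1
  congr 1
  funext i
  rw [Pi.exp_def, ← Complex.exp_eq_exp_ℂ]

lemma mul_flip (M : Matrix (Fin 2 × Fin 2) (Fin 2 × Fin 2) ℂ) (p q : Fin 2 × Fin 2) :
    (M * flipP) p q = M p (q.2, q.1) := by
  obtain ⟨c, d⟩ := q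
  fin_cases c <;> fin_cases d <;>
    simp [Matrix.mul_apply, flipP, Fintype.sum_prod_type, Fin.sum_univ_two, Prod.ext_iff]

lemma flip_eq_one (p q : Fin 2 × Fin 2) : flipP p q = (1 : Matrix (Fin 2 × Fin 2) (Fin 2 × Fin 2) ℂ) p (q.2, q.1) := by
  simp [flipP, Matrix.one_apply, Prod.ext_iff, and_comm]

lemma UdV (v : Fin 2 × Fin 2 → ℂ) (p r : Fin 2 × Fin 2) :
    (Umat * diagonal v * Uinv) p r = ∑ i, Umat p i * v i * Uinv i r := by
  rw [Matrix.mul_apply]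
  refine Finset.sum_congr rfl fun i _ => ?_
  rw [Matrix.mul_diagonal]


theorem sixVertex_matches_XXZ_to_first_order (α : ℂ) (hα : Complex.sinh α ≠ 0)
    (J : ℂ) (hJ : J = Complex.cosh α)
    (ε : ℂ → ℂ) (hε : ∀ u, ε u = -Complex.sinh u / (2 * Complex.sinh α))
    (F G : ℂ → Matrix (Fin 2 × Fin 2) (Fin 2 × Fin 2) ℂ)
    (hF : ∀ u, F u = (Complex.sinh (u + α))⁻¹ • sixVertexR α u)
    (hG : ∀ u, G u = (1 - J * ε u)⁻¹ • (NormedSpace.exp (-(ε u) • H2 J) * flipP)) :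
    F 0 = flipP ∧ G 0 = flipP ∧
      ∃ D : Matrix (Fin 2 × Fin 2) (Fin 2 × Fin 2) ℂ,
        (∀ p q, HasDerivAt (fun u => F u p q) (D p q) 0) ∧
        (∀ p q, HasDerivAt (fun u => G u p q) (D p q) 0) := by
  have hε0 : ε 0 = 0 := by simp [hε]
  set e' : ℂ := -(1 / (2 * Complex.sinh α)) with he'
  have hεd : HasDerivAt ε e' 0 := by
    have hfun : ε = fun u => -Complex.sinh u / (2 * Complex.sinh α) := funext hε
    rw [hfun]
    have h := (Complex.hasDerivAt_sinh 0).neg.div_const (2 * Complex.sinh α)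
    simpa [he', neg_div] using h
  have hF0 : F 0 = flipP := by
    rw [hF]
    ext ⟨a, b⟩ ⟨c, d⟩
    fin_cases a <;> fin_cases b <;> fin_cases c <;> fin_cases d <;>
      simp [sixVertexR, flipP, inv_mul_cancel₀ hα, Prod.ext_iff]
  have hG0 : G 0 = flipP := by
    rw [hG, hε0]
    simp
  refine ⟨hF0, hG0, (J * e') • flipP + (-e') • (H2 J * flipP), ?_, ?_⟩
  · -- F derivative
    intro p q
    have hsd : HasDerivAt (fun u : ℂ => Complex.sinh (u + α)) (Complex.cosh α) 0 := by
      simpa using ((hasDerivAt_id (0 : ℂ)).add_const α).csinh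
    have hid : HasDerivAt (fun u : ℂ => (Complex.sinh (u + α))⁻¹)
        (-(Complex.cosh α) / (Complex.sinh α) ^ 2) 0 := by
      simpa using hsd.fun_inv (by simpa using hα)
    have hfe : (fun u => F u p q) = fun u => (Complex.sinh (u + α))⁻¹ * sixVertexR α u p q := by
      funext u; rw [hF]; simp
    rw [hfe]
    have happ : ∀ u, sixVertexR α u p q =
        if p = q then (if p.1 = p.2 then Complex.sinh (u + α) else Complex.sinh u)
        else if p.1 = q.2 ∧ p.2 = q.1 ∧ p.1 ≠ p.2 then Complex.sinh α else 0 := fun u => rfl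
    by_cases h1 : p = q
    · by_cases h2 : p.1 = p.2
      · have hfn : (fun u => (Complex.sinh (u + α))⁻¹ * sixVertexR α u p q)
            = fun u => (Complex.sinh (u + α))⁻¹ * Complex.sinh (u + α) := by
          funext u; rw [happ u, if_pos h1, if_pos h2]
        rw [hfn]
        have hD : ((J * e') • flipP + (-e') • (H2 J * flipP)) p q = 0 := by
          clear hfn happ hfe hsd hid hεd hF0 hG0 hF hG hε hε0 F G ε
          subst h1
          obtain ⟨a, b⟩ := p
          have hab : a = b := h2
          subst hab
          fin_cases a <;>
            simp [Matrix.add_apply, Matrix.smul_apply, smul_eq_mul, mul_flip, flipP,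
              H2, pauli, Matrix.kroneckerMap_apply] <;> ring
        rw [hD]
        have := hid.fun_mul hsd
        refine this.congr_deriv (Eq.symm ?_)
        field_simp
        try ring
      · have hfn : (fun u => (Complex.sinh (u + α))⁻¹ * sixVertexR α u p q)
            = fun u => (Complex.sinh (u + α))⁻¹ * Complex.sinh u := by
          funext u; rw [happ u, if_pos h1, if_neg h2]
        rw [hfn]
        have hD : ((J * e') • flipP + (-e') • (H2 J * flipP)) p q = (Complex.sinh α)⁻¹ := by
          clear hfn happ hfe hsd hid hεd hF0 hG0 hF hG hε hε0 F G ε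
          subst h1
          obtain ⟨a, b⟩ := p
          fin_cases a <;> fin_cases b <;>
            [skip; skip; skip; skip] <;>
            first
            | (exact absurd rfl h2)
            | (simp [Matrix.add_apply, Matrix.smul_apply, smul_eq_mul, mul_flip, flipP,
                H2, pauli, Matrix.kroneckerMap_apply, he'] <;> field_simp <;> ring)
        rw [hD]
        have := hid.fun_mul (Complex.hasDerivAt_sinh 0)
        refine this.congr_deriv (Eq.symm ?_)
        simp only [Complex.sinh_zero, Complex.cosh_zero, zero_add]
        field_simp
        try ring
    · by_cases h2 : p.1 = q.2 ∧ p.2 = q.1 ∧ p.1 ≠ p.2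
      · have hfn : (fun u => (Complex.sinh (u + α))⁻¹ * sixVertexR α u p q)
            = fun u => (Complex.sinh (u + α))⁻¹ * Complex.sinh α := by
          funext u; rw [happ u, if_neg h1, if_pos h2]
        rw [hfn]
        have hD : ((J * e') • flipP + (-e') • (H2 J * flipP)) p q
            = -(Complex.cosh α) * (Complex.sinh α)⁻¹ := by
          clear hfn happ hfe hsd hid hεd hF0 hG0 hF hG hε hε0 F G ε
          obtain ⟨hA, hB, hC⟩ := h2
          have hq : q = (p.2, p.1) := by
            rw [hB, hA]
          subst hq
          obtain ⟨a, b⟩ := p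
          fin_cases a <;> fin_cases b <;>
            first
            | (exact absurd rfl hC)
            | (simp [Matrix.add_apply, Matrix.smul_apply, smul_eq_mul, mul_flip, flipP,
                H2, pauli, Matrix.kroneckerMap_apply, he', hJ] <;> field_simp <;> ring)
        rw [hD]
        have := hid.mul_const (Complex.sinh α)
        refine this.congr_deriv (Eq.symm ?_)
        field_simp
        try ring
      · have hfn : (fun u => (Complex.sinh (u + α))⁻¹ * sixVertexR α u p q)
            = fun _ => (0 : ℂ) := by
          funext u; rw [happ u, if_neg h1, if_neg h2, mul_zero]
        rw [hfn]
        have hD : ((J * e') • flipP + (-e') • (H2 J * flipP)) p q = 0 := by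
          clear hfn happ hfe hsd hid hεd hF0 hG0 hF hG hε hε0 F G ε hJ hα
          obtain ⟨a, b⟩ := p
          obtain ⟨c, d⟩ := q
          fin_cases a <;> fin_cases b <;> fin_cases c <;> fin_cases d <;>
            simp_all [Matrix.add_apply, Matrix.smul_apply, smul_eq_mul, mul_flip, flipP,
              H2, pauli, Matrix.kroneckerMap_apply, Prod.ext_iff] <;> ring
        rw [hD]
        exact hasDerivAt_const 0 0
  · -- G derivative
    intro p q
    have hGe : (fun u => G u p q) = fun u =>
        (1 - J * ε u)⁻¹ * ∑ i, Umat p i * Complex.exp (-ε u * dvec J i) * Uinv i (q.2, q.1) := by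
      funext u
      rw [hG, Matrix.smul_apply, exp_smul_H2, mul_flip, UdV, smul_eq_mul]
    rw [hGe]
    have h1 : HasDerivAt (fun u => 1 - J * ε u) (-(J * e')) 0 := (hεd.const_mul J).const_sub 1
    have h2 : HasDerivAt (fun u => (1 - J * ε u)⁻¹) (J * e') 0 := by
      have := h1.fun_inv (by simp [hε0])
      simpa [hε0] using this
    have h3 : ∀ i, HasDerivAt (fun u => Complex.exp (-ε u * dvec J i)) (-e' * dvec J i) 0 := by
      intro i
      have := (hεd.neg.mul_const (dvec J i)).cexp
      simpa [hε0] using this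
    have h4 : HasDerivAt
        (fun u => ∑ i, Umat p i * Complex.exp (-ε u * dvec J i) * Uinv i (q.2, q.1))
        (∑ i, Umat p i * (-e' * dvec J i) * Uinv i (q.2, q.1)) 0 :=
      HasDerivAt.fun_sum fun i _ => ((h3 i).const_mul _).mul_const _
    have h5 := h2.fun_mul h4
    refine h5.congr_deriv (Eq.symm ?_)
    have hone : (∑ i, Umat p i * Uinv i (q.2, q.1))
        = (1 : Matrix (Fin 2 × Fin 2) (Fin 2 × Fin 2) ℂ) p (q.2, q.1) := by
      rw [← UUinv, Matrix.mul_apply]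
    have hH : (∑ i, Umat p i * dvec J i * Uinv i (q.2, q.1)) = H2 J p (q.2, q.1) := by
      rw [H2decomp, UdV]
    have hsum : (∑ i, Umat p i * (-e' * dvec J i) * Uinv i (q.2, q.1))
        = -e' * ∑ i, Umat p i * dvec J i * Uinv i (q.2, q.1) := by
      rw [Finset.mul_sum]
      exact Finset.sum_congr rfl fun i _ => by ring
    simp only [Matrix.add_apply, Matrix.smul_apply, smul_eq_mul, mul_flip, flip_eq_one,
      hε0, mul_zero, sub_zero, inv_one, one_mul, neg_zero, zero_mul, Complex.exp_zero,
      mul_one, hsum, hH, hone]
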